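/- The function F_r(d) = 1 - 2Φ(-r/d) - (2/(√(2π)(r/d)))(1 - e^{-(r/d)²/2}) is monotonically decreasing in d for d > 0 (for any fixed r > 0). -/

import Mathlib

noncomputable def stdNormalCDF (t : ℝ) : ℝ :=
  ∫ u in Set.Iic t, Real.exp (-u ^ 2 / 2) / Real.sqrt (2 * Real.pi)

noncomputable def collisionF (r d : ℝ) : ℝ :=
  1 - 2 * stdNormalCDF (-(r / d)) -
    (2 / (Real.sqrt (2 * Real.pi) * (r / d))) * (1 - Real.exp (-(r / d) ^ 2 / 2))

noncomputable def Gfun (c : ℝ) : ℝ :=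
  1 - 2 * stdNormalCDF (-c) -
    (2 / (Real.sqrt (2 * Real.pi) * c)) * (1 - Real.exp (-c ^ 2 / 2))

lemma gauss_integrable :
    MeasureTheory.Integrable (fun u : ℝ => Real.exp (-u ^ 2 / 2) / Real.sqrt (2 * Real.pi)) := by
  have h := integrable_exp_neg_mul_sq (by norm_num : (0:ℝ) < 1/2)
  have heq : (fun u : ℝ => Real.exp (-u ^ 2 / 2) / Real.sqrt (2 * Real.pi))
      = fun u : ℝ => Real.exp (-(1/2) * u ^ 2) * (Real.sqrt (2 * Real.pi))⁻¹ := by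
    funext u
    rw [div_eq_mul_inv]
    congr 2
    ring
  rw [heq]
  exact h.mul_const _

lemma hasDerivAt_stdNormalCDF (x : ℝ) :
    HasDerivAt stdNormalCDF (Real.exp (-x ^ 2 / 2) / Real.sqrt (2 * Real.pi)) x := by
  have hint := gauss_integrable
  have hcont : Continuous fun u : ℝ => Real.exp (-u ^ 2 / 2) / Real.sqrt (2 * Real.pi) := by
    continuity
  have key : stdNormalCDF = fun t =>
      (∫ u in Set.Iic (0:ℝ), Real.exp (-u ^ 2 / 2) / Real.sqrt (2 * Real.pi)) +
        ∫ u in (0:ℝ)..t, Real.exp (-u ^ 2 / 2) / Real.sqrt (2 * Real.pi) := by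
    funext t
    unfold stdNormalCDF
    rw [← intervalIntegral.integral_Iic_sub_Iic hint.integrableOn hint.integrableOn]
    ring
  have hd : HasDerivAt (fun t => ∫ u in (0:ℝ)..t, Real.exp (-u ^ 2 / 2) / Real.sqrt (2 * Real.pi))
      (Real.exp (-x ^ 2 / 2) / Real.sqrt (2 * Real.pi)) x :=
    intervalIntegral.integral_hasDerivAt_right hint.intervalIntegrable
      (hcont.stronglyMeasurableAtFilter _ _) hcont.continuousAt
  rw [key]
  exact hd.const_add _

lemma hasDerivAt_Gfun (c : ℝ) (hc : 0 < c) :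
    HasDerivAt Gfun
      (2 / (Real.sqrt (2 * Real.pi) * c ^ 2) * (1 - Real.exp (-c ^ 2 / 2))) c := by
  have hs : 0 < Real.sqrt (2 * Real.pi) := Real.sqrt_pos.2 (by positivity)
  -- derivative of c ↦ stdNormalCDF (-c)
  have h1 : HasDerivAt (fun c : ℝ => stdNormalCDF (-c))
      (Real.exp (-c ^ 2 / 2) / Real.sqrt (2 * Real.pi) * (-1)) c := by
    have := (hasDerivAt_stdNormalCDF (-c)).comp c (hasDerivAt_neg c)
    simpa [Function.comp_def] using this
  -- derivative of c ↦ exp (-c^2/2)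
  have h2 : HasDerivAt (fun c : ℝ => Real.exp (-c ^ 2 / 2)) (Real.exp (-c ^ 2 / 2) * (-c)) c := by
    have harg : HasDerivAt (fun c : ℝ => -c ^ 2 / 2) (-c) c := by
      have := ((hasDerivAt_pow 2 c).neg).div_const 2
      refine this.congr_deriv ?_
      ring
    exact (Real.hasDerivAt_exp _).comp c harg
  -- derivative of c ↦ 2 / (√(2π) * c)
  have h3 : HasDerivAt (fun c : ℝ => 2 / (Real.sqrt (2 * Real.pi) * c))
      ((0 * (Real.sqrt (2 * Real.pi) * c) - 2 * Real.sqrt (2 * Real.pi)) /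
        (Real.sqrt (2 * Real.pi) * c) ^ 2) c := by
    have hden : HasDerivAt (fun c : ℝ => Real.sqrt (2 * Real.pi) * c)
        (Real.sqrt (2 * Real.pi)) c := by
      simpa using (hasDerivAt_id c).const_mul (Real.sqrt (2 * Real.pi))
    exact (hasDerivAt_const c 2).div hden (by positivity)
  have h4 : HasDerivAt (fun c : ℝ => 1 - Real.exp (-c ^ 2 / 2))
      (0 - Real.exp (-c ^ 2 / 2) * (-c)) c := (hasDerivAt_const c 1).sub h2
  have h5 := ((h1.const_mul 2).const_sub 1).sub (h3.mul h4)
  refine h5.congr_deriv ?_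
  have hc' : c ≠ 0 := ne_of_gt hc
  have hs' : Real.sqrt (2 * Real.pi) ≠ 0 := ne_of_gt hs
  field_simp
  ring

lemma Gfun_strictMono : StrictMonoOn Gfun (Set.Ioi (0 : ℝ)) := by
  have hconv : Convex ℝ (Set.Ioi (0:ℝ)) := convex_Ioi 0
  apply strictMonoOn_of_deriv_pos hconv
  · intro x hx
    exact (hasDerivAt_Gfun x hx).continuousAt.continuousWithinAt
  · intro x hx
    rw [interior_Ioi] at hx
    rw [(hasDerivAt_Gfun x hx).deriv]
    have hs : 0 < Real.sqrt (2 * Real.pi) := Real.sqrt_pos.2 (mul_pos two_pos Real.pi_pos)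
    have hexp : Real.exp (-x ^ 2 / 2) < 1 := by
      apply Real.exp_lt_one_iff.mpr ?_ |>.trans_le le_rfl
      have : 0 < x ^ 2 := pow_pos hx 2
      linarith
    have h1 : 0 < 1 - Real.exp (-x ^ 2 / 2) := by linarith
    have h2 : 0 < 2 / (Real.sqrt (2 * Real.pi) * x ^ 2) :=
      div_pos two_pos (mul_pos hs (pow_pos hx 2))
    exact mul_pos h2 h1

theorem collisionF_antitone (r : ℝ) (hr : 0 < r) :
    StrictAntiOn (fun d => collisionF r d) (Set.Ioi (0 : ℝ)) := by
  intro d1 h1 d2 h2 hlt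
  have hd1 : (0:ℝ) < d1 := h1
  have hd2 : (0:ℝ) < d2 := h2
  have hq : r / d2 < r / d1 := div_lt_div_of_pos_left hr hd1 hlt
  have hm2 : r / d2 ∈ Set.Ioi (0:ℝ) := by simp [Set.mem_Ioi]; positivity
  have hm1 : r / d1 ∈ Set.Ioi (0:ℝ) := by simp [Set.mem_Ioi]; positivity
  have := Gfun_strictMono hm2 hm1 hq
  simpa [Gfun, collisionF] using this
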